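/- For every nonnegative integer k, the two-variable identity 1/(z;q)_k = \sum_{j=0}^{k} z^j q^{j^2} [k choose j]_q * 1/(z;q)_j holds as an identity of formal power series, where (z;q)_k = \prod_{i=1}^{k}(1 - q^i z). -/

import Mathlib

open MvPowerSeries

/-- The variable `z` in `ℚ[[z,q]]`. -/
noncomputable def z : MvPowerSeries (Fin 2) ℚ := X 0
/-- The variable `q` in `ℚ[[z,q]]`. -/
noncomputable def q : MvPowerSeries (Fin 2) ℚ := X 1

/-- `(z;q)_k = (1-qz)(1-q²z)⋯(1-q^k z)`. -/
noncomputable def zqpoch (k : ℕ) : MvPowerSeries (Fin 2) ℚ :=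
  ∏ i ∈ Finset.range k, (1 - q ^ (i + 1) * z)

/-- `(q)_k = (1-q)(1-q²)⋯(1-q^k)`. -/
noncomputable def qpoch (k : ℕ) : MvPowerSeries (Fin 2) ℚ :=
  ∏ i ∈ Finset.range k, (1 - q ^ (i + 1))

/-- Gaussian binomial coefficient `[k choose j]_q`. -/
noncomputable def gauss (k j : ℕ) : MvPowerSeries (Fin 2) ℚ :=
  qpoch k * (qpoch j * qpoch (k - j))⁻¹

/-- shifted pochhammer `(q^m z; q)_k` -/
noncomputable def P (m k : ℕ) : MvPowerSeries (Fin 2) ℚ :=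
  ∏ i ∈ Finset.range k, (1 - q ^ (i + m + 1) * z)

lemma cc_q_pow (n : ℕ) (hn : n ≠ 0) : (constantCoeff (σ := Fin 2) (R := ℚ)) (q ^ n) = 0 := by
  rw [map_pow, q, constantCoeff_X, zero_pow hn]

lemma cc_one_sub_q_pow (n : ℕ) (hn : n ≠ 0) :
    (constantCoeff (σ := Fin 2) (R := ℚ)) (1 - q ^ n) = 1 := by
  rw [map_sub, map_one, cc_q_pow n hn, sub_zero]

lemma cc_one_sub_q_pow_z (n : ℕ) :
    (constantCoeff (σ := Fin 2) (R := ℚ)) (1 - q ^ n * z) = 1 := by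
  rw [map_sub, map_one, map_mul, z, constantCoeff_X, mul_zero, sub_zero]

lemma cc_qpoch (n : ℕ) : (constantCoeff (σ := Fin 2) (R := ℚ)) (qpoch n) = 1 := by
  rw [qpoch, map_prod]
  apply Finset.prod_eq_one
  intro i _
  exact cc_one_sub_q_pow (i + 1) (Nat.succ_ne_zero i)

lemma cc_P (m k : ℕ) : (constantCoeff (σ := Fin 2) (R := ℚ)) (P m k) = 1 := by
  rw [P, map_prod]
  exact Finset.prod_eq_one fun i _ => cc_one_sub_q_pow_z (i + m + 1)

lemma mul_inv_cancel' {f : MvPowerSeries (Fin 2) ℚ}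
    (h : (constantCoeff (σ := Fin 2) (R := ℚ)) f = 1) : f * f⁻¹ = 1 :=
  MvPowerSeries.mul_inv_cancel f (by rw [h]; exact one_ne_zero)

lemma ne_zero' {f : MvPowerSeries (Fin 2) ℚ}
    (h : (constantCoeff (σ := Fin 2) (R := ℚ)) f = 1) : f ≠ 0 := by
  intro h0
  rw [h0, map_zero] at h
  exact zero_ne_one h

lemma qpoch_succ (n : ℕ) : qpoch (n + 1) = qpoch n * (1 - q ^ (n + 1)) :=
  Finset.prod_range_succ _ n

lemma P_succ' (m j : ℕ) : P m (j + 1) = P m j * (1 - q ^ (j + m + 1) * z) :=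
  Finset.prod_range_succ _ j

lemma P_succ (m k : ℕ) : P m (k + 1) = (1 - q ^ (m + 1) * z) * P (m + 1) k := by
  have h : P (m + 1) k = ∏ i ∈ Finset.range k, (1 - q ^ (i + 1 + m + 1) * z) := by
    rw [P]
    exact Finset.prod_congr rfl fun i _ => by rw [show i + (m + 1) + 1 = i + 1 + m + 1 by omega]
  rw [h, P, Finset.prod_range_succ', show (0 : ℕ) + m + 1 = m + 1 by omega]
  exact mul_comm _ _

lemma P_zero_eq (k : ℕ) : P 0 k = zqpoch k := by
  rw [P, zqpoch]

lemma gauss_zero (k : ℕ) : gauss k 0 = 1 := by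
  rw [gauss, Nat.sub_zero, show qpoch 0 = 1 from Finset.prod_range_zero _, one_mul]
  exact mul_inv_cancel' (cc_qpoch k)

lemma gauss_self (k : ℕ) : gauss k k = 1 := by
  rw [gauss, Nat.sub_self, show qpoch 0 = 1 from Finset.prod_range_zero _, mul_one]
  exact mul_inv_cancel' (cc_qpoch k)

lemma gauss_pascal (a b : ℕ) :
    gauss (a + b + 2) (a + 1) = q ^ (a + 1) * gauss (a + b + 1) (a + 1) + gauss (a + b + 1) a := by
  rw [gauss, gauss, gauss, show a + b + 2 - (a + 1) = b + 1 by omega,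
    show a + b + 1 - (a + 1) = b by omega, show a + b + 1 - a = b + 1 by omega,
    show a + b + 2 = (a + b + 1) + 1 by omega, qpoch_succ (a + b + 1),
    qpoch_succ a, qpoch_succ b]
  have h1 := mul_inv_cancel' (f := qpoch a * (1 - q ^ (a + 1)) * (qpoch b * (1 - q ^ (b + 1))))
    (by rw [map_mul, map_mul, map_mul, cc_qpoch, cc_qpoch,
      cc_one_sub_q_pow _ (Nat.succ_ne_zero a), cc_one_sub_q_pow _ (Nat.succ_ne_zero b)]; ring)
  have h2 := mul_inv_cancel' (f := qpoch a * (1 - q ^ (a + 1)) * qpoch b)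
    (by rw [map_mul, map_mul, cc_qpoch, cc_qpoch, cc_one_sub_q_pow _ (Nat.succ_ne_zero a)]; ring)
  have h3 := mul_inv_cancel' (f := qpoch a * (qpoch b * (1 - q ^ (b + 1))))
    (by rw [map_mul, map_mul, cc_qpoch, cc_qpoch, cc_one_sub_q_pow _ (Nat.succ_ne_zero b)]; ring)
  have hne : qpoch a * (1 - q ^ (a + 1)) * (qpoch b * (1 - q ^ (b + 1))) ≠ 0 :=
    ne_zero' (by rw [map_mul, map_mul, map_mul, cc_qpoch, cc_qpoch,
      cc_one_sub_q_pow _ (Nat.succ_ne_zero a), cc_one_sub_q_pow _ (Nat.succ_ne_zero b)]; ring)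
  apply mul_left_cancel₀ hne
  linear_combination (qpoch (a + b + 1) * ((1 - q ^ (a + 1)) + q ^ (a + 1) * (1 - q ^ (b + 1)))) * h1
    - q ^ (a + 1) * qpoch (a + b + 1) * (1 - q ^ (b + 1)) * h2
    - qpoch (a + b + 1) * (1 - q ^ (a + 1)) * h3

lemma pascal' {j k : ℕ} (hj : j < k) :
    gauss (k + 1) (j + 1) = q ^ (j + 1) * gauss k (j + 1) + gauss k j := by
  obtain ⟨b, rfl⟩ : ∃ b, k = j + b + 1 := ⟨k - j - 1, by omega⟩
  have := gauss_pascal j b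
  rwa [show j + b + 2 = j + b + 1 + 1 by omega] at this

lemma Pinv_succ (m j : ℕ) :
    (P m (j + 1))⁻¹ = (P m j)⁻¹ + q ^ (j + m + 1) * z * (P m (j + 1))⁻¹ := by
  have hs := P_succ' m j
  have h1 : P m (j + 1) * (P m (j + 1))⁻¹ = 1 := mul_inv_cancel' (cc_P _ _)
  have h2 : P m j * (P m j)⁻¹ = 1 := mul_inv_cancel' (cc_P _ _)
  have hne : P m (j + 1) ≠ 0 := ne_zero' (cc_P _ _)
  apply mul_left_cancel₀ hne
  linear_combination (1 - q ^ (j + m + 1) * z) * h1 - (1 - q ^ (j + m + 1) * z) * h2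
    - (P m j)⁻¹ * hs

lemma main (k : ℕ) : ∀ m : ℕ, (P m k)⁻¹ =
    ∑ j ∈ Finset.range (k + 1),
      z ^ j * q ^ (m * j + j ^ 2) * gauss k j * (P m j)⁻¹ := by
  induction k with
  | zero =>
    intro m
    rw [Finset.sum_range_one, gauss_zero, show P m 0 = 1 from Finset.prod_range_zero _]
    simp
  | succ k ih =>
    intro m
    have hterm : ∀ j : ℕ, (1 - q ^ (m + 1) * z)⁻¹ * (P (m + 1) j)⁻¹ = (P m (j + 1))⁻¹ := by
      intro j
      rw [P_succ m j, MvPowerSeries.mul_inv_rev, mul_comm]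
    have E1 : (P m (k + 1))⁻¹ =
        ∑ j ∈ Finset.range (k + 1),
          (z ^ j * q ^ (m * j + j ^ 2) * (q ^ j * gauss k j) * (P m j)⁻¹
            + z ^ (j + 1) * q ^ (m * (j + 1) + (j + 1) ^ 2) * gauss k j * (P m (j + 1))⁻¹) := by
      rw [P_succ m k, MvPowerSeries.mul_inv_rev, mul_comm, ih (m + 1), Finset.mul_sum]
      refine Finset.sum_congr rfl fun j _ => ?_
      conv_lhs => rw [show (1 - q ^ (m + 1) * z)⁻¹ * (z ^ j * q ^ ((m + 1) * j + j ^ 2) * gauss k j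
            * (P (m + 1) j)⁻¹)
          = z ^ j * q ^ ((m + 1) * j + j ^ 2) * gauss k j
            * ((1 - q ^ (m + 1) * z)⁻¹ * (P (m + 1) j)⁻¹) by ring, hterm j, Pinv_succ m j]
      ring
    rw [E1, Finset.sum_add_distrib]
    rw [Finset.sum_range_succ' (fun j => z ^ j * q ^ (m * j + j ^ 2) * gauss (k + 1) j * (P m j)⁻¹)
      (k + 1)]
    rw [Finset.sum_range_succ (fun j =>
      z ^ (j + 1) * q ^ (m * (j + 1) + (j + 1) ^ 2) * gauss (k + 1) (j + 1) * (P m (j + 1))⁻¹) k]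
    rw [Finset.sum_range_succ' (fun j =>
      z ^ j * q ^ (m * j + j ^ 2) * (q ^ j * gauss k j) * (P m j)⁻¹) k]
    rw [Finset.sum_range_succ (fun j =>
      z ^ (j + 1) * q ^ (m * (j + 1) + (j + 1) ^ 2) * gauss k j * (P m (j + 1))⁻¹) k]
    have h0 : z ^ 0 * q ^ (m * 0 + 0 ^ 2) * (q ^ 0 * gauss k 0) * (P m 0)⁻¹
        = z ^ 0 * q ^ (m * 0 + 0 ^ 2) * gauss (k + 1) 0 * (P m 0)⁻¹ := by
      rw [gauss_zero, gauss_zero]; ring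
    have hk : z ^ (k + 1) * q ^ (m * (k + 1) + (k + 1) ^ 2) * gauss k k * (P m (k + 1))⁻¹
        = z ^ (k + 1) * q ^ (m * (k + 1) + (k + 1) ^ 2) * gauss (k + 1) (k + 1)
          * (P m (k + 1))⁻¹ := by
      rw [gauss_self, gauss_self]
    have hmid : ∑ j ∈ Finset.range k,
          (z ^ (j + 1) * q ^ (m * (j + 1) + (j + 1) ^ 2) * (q ^ (j + 1) * gauss k (j + 1))
            * (P m (j + 1))⁻¹)
        + ∑ j ∈ Finset.range k,
          (z ^ (j + 1) * q ^ (m * (j + 1) + (j + 1) ^ 2) * gauss k j * (P m (j + 1))⁻¹)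
        = ∑ j ∈ Finset.range k,
          (z ^ (j + 1) * q ^ (m * (j + 1) + (j + 1) ^ 2) * gauss (k + 1) (j + 1)
            * (P m (j + 1))⁻¹) := by
      rw [← Finset.sum_add_distrib]
      refine Finset.sum_congr rfl fun j hj => ?_
      rw [pascal' (Finset.mem_range.mp hj)]
      ring
    linear_combination hmid + h0 + hk

/-- The enriched (two-variable) Durfee square identity:
`1/(z;q)_k = ∑_{j=0}^k z^j q^{j²} [k choose j]_q 1/(z;q)_j`. -/
theorem enriched_durfee_square_identity (k : ℕ) :
    (zqpoch k)⁻¹ =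
      ∑ j ∈ Finset.range (k + 1),
        z ^ j * q ^ (j ^ 2) * gauss k j * (zqpoch j)⁻¹ := by
  have h := main k 0
  simp only [Nat.zero_mul, Nat.zero_add, P_zero_eq] at h
  exact h
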